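/- A triangle and the pedal triangle of a point in its plane are orthological: Let A, B, C be affinely independent points in the Euclidean plane, let P be a point, and let A' be the orthogonal projection of P onto line BC, B' the orthogonal projection of P onto line CA, and C' the orthogonal projection of P onto line AB. Assume A', B', C' are affinely independent. Then there exists a point M such that M − A is orthogonal to C' − B', M − B is orthogonal to A' − C', and M − C is orthogonal to B' − A' (the perpendiculars from A, B, C to the sides B'C', C'A', A'B' of the pedal triangle are concurrent). -/

import Mathlib

open RealInnerProductSpace

/-- **A triangle and the pedal triangle of a point are orthological.** If `A'`, `B'`, `C'`
are the orthogonal projections of a point `P` onto the lines `BC`, `CA`, `AB` and they are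
affinely independent, then the perpendiculars from `A`, `B`, `C` to the sides `B'C'`,
`C'A'`, `A'B'` of the pedal triangle are concurrent. -/
theorem pedal_triangle_orthological (A B C P A' B' C' : EuclideanSpace ℝ (Fin 2))
    (hABC : AffineIndependent ℝ ![A, B, C])
    (hA' : A' ∈ line[ℝ, B, C]) (hA'perp : ⟪P - A', C - B⟫ = 0)
    (hB' : B' ∈ line[ℝ, C, A]) (hB'perp : ⟪P - B', A - C⟫ = 0)
    (hC' : C' ∈ line[ℝ, A, B]) (hC'perp : ⟪P - C', B - A⟫ = 0)
    (hped : AffineIndependent ℝ ![A', B', C']) :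
    ∃ M : EuclideanSpace ℝ (Fin 2),
        ⟪M - A, C' - B'⟫ = 0 ∧ ⟪M - B, A' - C'⟫ = 0 ∧ ⟪M - C, B' - A'⟫ = 0 := by
  set u : EuclideanSpace ℝ (Fin 2) := C' - B' with hu
  set v : EuclideanSpace ℝ (Fin 2) := A' - C' with hv
  -- the key orthology sum identity
  have hS : ⟪A, u⟫ + ⟪B, v⟫ + ⟪C, B' - A'⟫ = 0 := by
    simp only [hu, hv, inner_sub_left, inner_sub_right] at hA'perp hB'perp hC'perp ⊢
    linarith [real_inner_comm A' B, real_inner_comm A' C, real_inner_comm B' A,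
      real_inner_comm B' C, real_inner_comm C' A, real_inner_comm C' B]
  -- pedal triangle not collinear
  have hncol : ¬ Collinear ℝ ({A', B', C'} : Set (EuclideanSpace ℝ (Fin 2))) :=
    affineIndependent_iff_not_collinear_set.1 hped
  have hinj := hped.injective
  have huv : ∀ r : ℝ, v ≠ r • u := by
    intro r hr
    apply hncol
    have hmem : C' ∈ ({A', B', C'} : Set (EuclideanSpace ℝ (Fin 2))) := by simp
    rw [collinear_iff_of_mem hmem]
    refine ⟨u, ?_⟩
    intro p hp
    simp only [Set.mem_insert_iff, Set.mem_singleton_iff] at hp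
    rcases hp with rfl | rfl | rfl
    · exact ⟨r, by rw [← hr, hv, vadd_eq_add]; abel⟩
    · exact ⟨-1, by rw [hu, vadd_eq_add]; module⟩
    · exact ⟨0, by rw [vadd_eq_add, zero_smul, zero_add]⟩
  have hune : u ≠ 0 := by
    intro h
    have hCB : C' = B' := sub_eq_zero.1 (hu ▸ h)
    have : (2 : Fin 3) = 1 := hinj (by simpa using hCB)
    exact absurd this (by decide)
  have hvne : v ≠ 0 := fun h => huv 0 (by rw [h, zero_smul])
  -- Gram determinant is nonzero
  set d : ℝ := ⟪u, u⟫ * ⟪v, v⟫ - ⟪u, v⟫ ^ 2 with hd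
  have hd0 : d ≠ 0 := by
    intro h
    have hnu : ‖u‖ ≠ 0 := norm_ne_zero_iff.2 hune
    have habs : |⟪u, v⟫| = |‖u‖ * ‖v‖| := by
      rw [← sq_eq_sq_iff_abs_eq_abs]
      rw [hd, sub_eq_zero] at h
      rw [← h, real_inner_self_eq_norm_sq, real_inner_self_eq_norm_sq]; ring
    rw [abs_of_nonneg (by positivity : (0:ℝ) ≤ ‖u‖ * ‖v‖)] at habs
    rcases (abs_eq (by positivity)).1 habs with h1 | h1
    · have h2 := inner_eq_norm_mul_iff_real.1 h1
      refine huv (‖v‖ / ‖u‖) ?_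
      rw [div_eq_inv_mul, mul_smul, h2, inv_smul_smul₀ hnu]
    · have h1' : ⟪u, -v⟫ = ‖u‖ * ‖-v‖ := by
        rw [inner_neg_right, norm_neg, h1]; ring
      have h2 := inner_eq_norm_mul_iff_real.1 h1'
      refine huv (-(‖-v‖ / ‖u‖)) ?_
      have : -v = (‖u‖)⁻¹ • ‖-v‖ • u := by rw [h2, inv_smul_smul₀ hnu]
      rw [neg_smul, div_eq_inv_mul, mul_smul, ← this, neg_neg]
  -- solve the 2x2 linear system
  set a : ℝ := ⟪A, u⟫ with ha
  set b : ℝ := ⟪B, v⟫ with hb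
  set x : ℝ := (a * ⟪v, v⟫ - b * ⟪u, v⟫) / d with hx
  set y : ℝ := (b * ⟪u, u⟫ - a * ⟪u, v⟫) / d with hy
  have hvu : ⟪v, u⟫ = ⟪u, v⟫ := real_inner_comm u v
  have h1 : ⟪x • u + y • v, u⟫ = a := by
    rw [inner_add_left, real_inner_smul_left, real_inner_smul_left, hvu, hx, hy,
      div_mul_eq_mul_div, div_mul_eq_mul_div, ← add_div, div_eq_iff hd0, hd]
    ring
  have h2 : ⟪x • u + y • v, v⟫ = b := by
    rw [inner_add_left, real_inner_smul_left, real_inner_smul_left, hx, hy,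
      div_mul_eq_mul_div, div_mul_eq_mul_div, ← add_div, div_eq_iff hd0, hd]
    ring
  refine ⟨x • u + y • v, ?_, ?_, ?_⟩
  · rw [inner_sub_left, h1, ha, sub_self]
  · rw [inner_sub_left, h2, hb, sub_self]
  · have hBA : B' - A' = -u - v := by rw [hu, hv]; module
    rw [hBA] at hS ⊢
    rw [inner_sub_left, inner_sub_right, inner_neg_right, h1, h2,
      inner_sub_right, inner_neg_right]
    rw [inner_sub_right, inner_neg_right] at hS
    linarith
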